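/- In the space βℕ of ultrafilters on ℕ (the Stone–Čech compactification of the discrete space ℕ, i.e. the space Ultrafilter ℕ with the topology whose basic open sets are the cones ⟨A⟩ = {U : A ∈ U} for A ⊆ ℕ), every convergent sequence is trivial: if a sequence (U_n) of ultrafilters on ℕ converges to an ultrafilter U, then (U_n) is eventually constant. -/

import Mathlib

open Filter Topology

/-- In `βℕ`, the space of ultrafilters on `ℕ` with its standard (Stone) topology,
every convergent sequence is eventually constant. -/
theorem betaNat_no_nontrivial_convergent_sequence
    (U : ℕ → Ultrafilter ℕ) (L : Ultrafilter ℕ)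
    (hconv : Tendsto U atTop (𝓝 L)) :
    ∃ c : Ultrafilter ℕ, ∀ᶠ n in atTop, U n = c := by
  by_contra hcon
  push_neg at hcon
  have hfreq : ∃ᶠ n in atTop, U n ≠ L := by
    by_contra h
    rw [Filter.not_frequently] at h
    push_neg at h
    exact hcon L (h.mono fun x hx => not_not_intro hx)
  obtain ⟨n, hn_mono, hnL⟩ := Filter.extraction_of_frequently_atTop hfreq
  set W : ℕ → Ultrafilter ℕ := fun k => U (n k) with hW
  have hWconv : Tendsto W atTop (𝓝 L) := hconv.comp hn_mono.tendsto_atTop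
  -- choose a witness set in each `W k` that is not in `L`
  have hS : ∀ k, ∃ s : Set ℕ, s ∈ W k ∧ s ∉ L := by
    intro k
    by_contra h
    push_neg at h
    apply hnL k
    have hle : (L : Filter ℕ) ≤ (W k : Filter ℕ) := fun s hs => h s hs
    exact Ultrafilter.coe_injective (Ultrafilter.unique (W k) hle).symm
  choose S hSW hSL using hS
  -- eventually later ultrafilters avoid earlier witness sets
  have hev : ∀ j, ∀ᶠ k in atTop, (S j)ᶜ ∈ W k := by
    intro j
    have hLmem : (S j)ᶜ ∈ L := (Ultrafilter.compl_mem_iff_notMem).mpr (hSL j)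
    exact hWconv.eventually ((ultrafilter_isOpen_basic (S j)ᶜ).mem_nhds hLmem)
  have hN : ∀ j, ∃ N, ∀ k, k ≥ N → (S j)ᶜ ∈ W k := fun j => eventually_atTop.mp (hev j)
  choose N hNspec using hN
  -- recursive subsequence
  set g : ℕ → ℕ := fun p => max (p + 1) (Finset.sup (Finset.range (p + 1)) N) with hg
  set φ : ℕ → ℕ := fun m => g^[m] 0 with hφ
  have hφsucc : ∀ m, φ (m + 1) = g (φ m) := by
    intro m
    simp [hφ, Function.iterate_succ_apply']
  have hφmono : StrictMono φ := by
    apply strictMono_nat_of_lt_succ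
    intro m
    rw [hφsucc]
    exact lt_of_lt_of_le (Nat.lt_succ_self _) (le_max_left _ _)
  have hkey : ∀ i m, i < m → (S (φ i))ᶜ ∈ W (φ m) := by
    intro i m him
    apply hNspec (φ i) (φ m)
    calc N (φ i) ≤ Finset.sup (Finset.range (φ i + 1)) N :=
          Finset.le_sup (Finset.mem_range.mpr (Nat.lt_succ_self _))
      _ ≤ g (φ i) := le_max_right _ _
      _ = φ (i + 1) := (hφsucc i).symm
      _ ≤ φ m := hφmono.le_iff_le.mpr him
  -- pairwise disjoint sets
  set A : ℕ → Set ℕ := fun m => S (φ m) ∩ ⋂ i ∈ Finset.range m, (S (φ i))ᶜ with hA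
  have hA_mem : ∀ m, A m ∈ W (φ m) := by
    intro m
    apply Filter.inter_mem (hSW (φ m))
    exact (Filter.biInter_finset_mem _).mpr fun i hi => hkey i m (Finset.mem_range.mp hi)
  have hA_sub : ∀ m, A m ⊆ S (φ m) := fun m => Set.inter_subset_left
  have hA_subc : ∀ i m, i < m → A m ⊆ (S (φ i))ᶜ := by
    intro i m him x hx
    exact Set.mem_iInter₂.mp hx.2 i (Finset.mem_range.mpr him)
  have hdisj : ∀ i m, i ≠ m → ∀ x, x ∈ A i → x ∉ A m := by
    intro i m hne x hxi hxm
    rcases lt_or_gt_of_ne hne with h | h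
    · exact hA_subc i m h hxm (hA_sub i hxi)
    · exact hA_subc m i h hxi (hA_sub m hxm)
  set B : Set ℕ := ⋃ k, A (2 * k) with hB
  have hB_even : ∀ k, B ∈ W (φ (2 * k)) := by
    intro k
    exact Filter.mem_of_superset (hA_mem (2 * k)) (Set.subset_iUnion (fun k => A (2 * k)) k)
  have hB_odd : ∀ k, Bᶜ ∈ W (φ (2 * k + 1)) := by
    intro k
    apply Filter.mem_of_superset (hA_mem (2 * k + 1))
    intro x hx hxB
    obtain ⟨j, hj⟩ := Set.mem_iUnion.mp hxB
    exact hdisj (2 * k + 1) (2 * j) (by omega) x hx hj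
  have hφconv : Tendsto (fun m => W (φ m)) atTop (𝓝 L) := hWconv.comp hφmono.tendsto_atTop
  rcases L.mem_or_compl_mem B with hBL | hBL
  · have hev2 : ∀ᶠ m in atTop, B ∈ W (φ m) :=
      hφconv.eventually ((ultrafilter_isOpen_basic B).mem_nhds hBL)
    obtain ⟨N0, hN0⟩ := eventually_atTop.mp hev2
    have h1 : B ∈ W (φ (2 * N0 + 1)) := hN0 _ (by omega)
    exact (Ultrafilter.compl_mem_iff_notMem.mp (hB_odd N0)) h1
  · have hev2 : ∀ᶠ m in atTop, Bᶜ ∈ W (φ m) :=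
      hφconv.eventually ((ultrafilter_isOpen_basic Bᶜ).mem_nhds hBL)
    obtain ⟨N0, hN0⟩ := eventually_atTop.mp hev2
    have h1 : Bᶜ ∈ W (φ (2 * N0)) := hN0 _ (by omega)
    exact (Ultrafilter.compl_mem_iff_notMem.mp h1) (hB_even N0)
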